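/- Let f : ℝ → ℝ be the inverse of h and define L : ℝ → ℝ by L(v) = f(v)². Then for every v ∈ ℝ, L is differentiable at v with L'(v) = 2·f(v)/√(1 + f(v)²), the derivative function L' is itself differentiable at v with L''(v) = 2/(1 + f(v)²)², and L''(v) > 0. -/

import Mathlib

/-- The change of variables `h(u) = (1/2)·u·√(1+u²) + (1/2)·log(u + √(1+u²))`. -/
noncomputable def h (u : ℝ) : ℝ :=
  (1 / 2) * u * Real.sqrt (1 + u ^ 2) + (1 / 2) * Real.log (u + Real.sqrt (1 + u ^ 2))

lemma one_add_sq_pos (u : ℝ) : (0:ℝ) < 1 + u ^ 2 := by positivity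

lemma sqrt_pos' (u : ℝ) : 0 < Real.sqrt (1 + u ^ 2) :=
  Real.sqrt_pos.mpr (one_add_sq_pos u)

lemma sqrt_sq' (u : ℝ) : Real.sqrt (1 + u ^ 2) ^ 2 = 1 + u ^ 2 :=
  Real.sq_sqrt (one_add_sq_pos u).le

lemma abs_lt_sqrt (u : ℝ) : |u| < Real.sqrt (1 + u ^ 2) := by
  rw [← Real.sqrt_sq_eq_abs]
  exact Real.sqrt_lt_sqrt (sq_nonneg u) (by linarith)

lemma add_sqrt_pos (u : ℝ) : 0 < u + Real.sqrt (1 + u ^ 2) := by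
  have := abs_lt_sqrt u
  have := neg_abs_le u
  linarith

lemma hasDerivAt_sqrt' (u : ℝ) :
    HasDerivAt (fun u : ℝ => Real.sqrt (1 + u ^ 2)) (u / Real.sqrt (1 + u ^ 2)) u := by
  have inner : HasDerivAt (fun u : ℝ => 1 + u ^ 2) (2 * u) u := by
    simpa using (hasDerivAt_pow 2 u).const_add 1
  have := (Real.hasDerivAt_sqrt (one_add_sq_pos u).ne').comp u inner
  refine this.congr_deriv (Eq.symm ?_)
  have := (sqrt_pos' u).ne'
  field_simp

lemma hasDerivAt_h (u : ℝ) : HasDerivAt h (Real.sqrt (1 + u ^ 2)) u := by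
  have hs := hasDerivAt_sqrt' u
  have hspos := sqrt_pos' u
  have hssq := sqrt_sq' u
  have h1 : HasDerivAt (fun u : ℝ => (1 / 2) * u * Real.sqrt (1 + u ^ 2))
      ((1 / 2) * Real.sqrt (1 + u ^ 2) + ((1 / 2) * u) * (u / Real.sqrt (1 + u ^ 2))) u := by
    have := ((hasDerivAt_id u).const_mul (1 / 2 : ℝ)).mul hs
    refine this.congr_deriv (Eq.symm ?_)
    simp only [id]
    ring
  have hinner : HasDerivAt (fun u : ℝ => u + Real.sqrt (1 + u ^ 2))
      (1 + u / Real.sqrt (1 + u ^ 2)) u := (hasDerivAt_id u).add hs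
  have h2 : HasDerivAt (fun u : ℝ => (1 / 2) * Real.log (u + Real.sqrt (1 + u ^ 2)))
      ((1 / 2) * ((1 + u / Real.sqrt (1 + u ^ 2)) / (u + Real.sqrt (1 + u ^ 2)))) u :=
    (hinner.log (add_sqrt_pos u).ne').const_mul (1 / 2)
  have := h1.add h2
  refine this.congr_deriv (Eq.symm ?_)
  have hne := hspos.ne'
  have hane := (add_sqrt_pos u).ne'
  have key : (1 + u / Real.sqrt (1 + u ^ 2)) / (u + Real.sqrt (1 + u ^ 2))
      = 1 / Real.sqrt (1 + u ^ 2) := by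
    field_simp
    ring
  rw [key]
  field_simp
  nlinarith [hssq]

theorem stmt_11 (f : ℝ → ℝ) (hf₁ : Function.LeftInverse f h)
    (hf₂ : Function.RightInverse f h) :
    ∀ v : ℝ,
      HasDerivAt (fun v : ℝ => f v ^ 2) (2 * f v / Real.sqrt (1 + f v ^ 2)) v ∧
      HasDerivAt (fun v : ℝ => 2 * f v / Real.sqrt (1 + f v ^ 2))
        (2 / (1 + f v ^ 2) ^ 2) v ∧
      0 < 2 / (1 + f v ^ 2) ^ 2 := by
  -- h is strictly monotone
  have hmono : StrictMono h := by
    apply strictMono_of_deriv_pos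
    intro x
    rw [(hasDerivAt_h x).deriv]
    exact sqrt_pos' x
  have hsurj : Function.Surjective h := hf₂.surjective
  -- f is continuous
  have hfcont : Continuous f := by
    have : f = (hmono.orderIsoOfSurjective h hsurj).symm := by
      funext v
      apply hmono.injective
      rw [hf₂ v]
      exact ((hmono.orderIsoOfSurjective h hsurj).apply_symm_apply v).symm
    rw [this]
    exact OrderIso.continuous _
  intro v
  have hspos := sqrt_pos' (f v)
  have hssq := sqrt_sq' (f v)
  have hne := hspos.ne'
  -- derivative of f
  have hf' : HasDerivAt f (Real.sqrt (1 + f v ^ 2))⁻¹ v := by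
    apply HasDerivAt.of_local_left_inverse hfcont.continuousAt (hasDerivAt_h (f v)) hne
    filter_upwards with x using hf₂ x
  -- first derivative of L
  have hL : HasDerivAt (fun v : ℝ => f v ^ 2) (2 * f v / Real.sqrt (1 + f v ^ 2)) v := by
    have := hf'.pow 2
    refine this.congr_deriv (Eq.symm ?_)
    field_simp
    norm_num
  refine ⟨hL, ?_, by positivity⟩
  -- second derivative
  have hs : HasDerivAt (fun v : ℝ => Real.sqrt (1 + f v ^ 2))
      (f v / Real.sqrt (1 + f v ^ 2) * (Real.sqrt (1 + f v ^ 2))⁻¹) v :=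
    (hasDerivAt_sqrt' (f v)).comp v hf'
  have hnum : HasDerivAt (fun v : ℝ => 2 * f v) (2 * (Real.sqrt (1 + f v ^ 2))⁻¹) v :=
    hf'.const_mul 2
  have := hnum.div hs hne
  refine this.congr_deriv (Eq.symm ?_)
  rw [div_eq_div_iff (by positivity) (by positivity)]
  field_simp
  nlinarith [hssq, hspos]
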